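/- arXiv:2302.11368 — 3 statements merged into one kernel-verified Lean document; each statement's English description precedes it below -/
import Mathlib

section
/- Let G be a finite minimal non-solvable group and let φ : G → H be a surjective group homomorphism onto a non-trivial group H. Then H is minimal non-solvable. -/
theorem mns_quotient (G H : Type*) [Group G] [Finite G] [Group H]
    (hns : ¬ IsSolvable G)
    (hmin : ∀ K : Subgroup G, K ≠ ⊤ → IsSolvable K)
    (φ : G →* H) (hφ : Function.Surjective φ) (hH : Nontrivial H) :
    ¬ IsSolvable H ∧ ∀ K : Subgroup H, K ≠ ⊤ → IsSolvable K := by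
  have hker : φ.ker ≠ ⊤ := by
    intro h
    obtain ⟨x, hx⟩ := exists_ne (1 : H)
    obtain ⟨g, rfl⟩ := hφ x
    exact hx (h ▸ Subgroup.mem_top g : g ∈ φ.ker)
  have hkersolv : Group.IsSolvable φ.ker := hmin _ hker
  constructor
  · intro (hHsolv : Group.IsSolvable H)
    exact hns (solvable_of_ker_le_range φ.ker.subtype φ
      (le_of_eq (Subgroup.range_subtype _).symm))
  · intro K hK
    have hcomap : K.comap φ ≠ ⊤ := fun h => hK (by
      rw [← Subgroup.comap_top φ] at h
      exact (Subgroup.comap_injective hφ) h)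
    have hsolv : Group.IsSolvable (K.comap φ) := hmin _ hcomap
    let ψ : K.comap φ →* K :=
      (φ.comp (K.comap φ).subtype).codRestrict K (fun x => x.2)
    have hψ : Function.Surjective ψ := by
      rintro ⟨y, hy⟩
      obtain ⟨x, rfl⟩ := hφ y
      exact ⟨⟨x, hy⟩, rfl⟩
    exact solvable_of_surjective hψ
end

section
/- Every finite subgroup of GL(3,ℤ) is solvable. -/
open Polynomial Matrix

abbrev R3 := Matrix (Fin 3) (Fin 3) ℤ

/-- entrywise divisibility -/
def EDvd (d : ℤ) (M : R3) : Prop := ∀ i j, d ∣ M i j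

lemma EDvd.add {d : ℤ} {M N : R3} (h1 : EDvd d M) (h2 : EDvd d N) : EDvd d (M + N) :=
  fun i j => by simpa using dvd_add (h1 i j) (h2 i j)

lemma EDvd.mul {d e : ℤ} {M N : R3} (h1 : EDvd d M) (h2 : EDvd e N) : EDvd (d * e) (M * N) := by
  intro i j
  rw [Matrix.mul_apply]
  exact Finset.dvd_sum fun k _ => mul_dvd_mul (h1 i k) (h2 k j)

lemma EDvd.mul_right {d : ℤ} {M : R3} (h1 : EDvd d M) (N : R3) : EDvd d (M * N) := by
  have := h1.mul (e := 1) (N := N) (fun i j => one_dvd _)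
  simpa using this

lemma EDvd.of_dvd {d e : ℤ} {M : R3} (h : e ∣ d) (h1 : EDvd d M) : EDvd e M :=
  fun i j => h.trans (h1 i j)

/-- polynomial expansion -/
lemma poly_expand (n : ℕ) : ∃ g : ℤ[X],
    (1 + X) ^ n = 1 + (n : ℤ[X]) * X + ((n.choose 2 : ℕ) : ℤ[X]) * X ^ 2 + X ^ 3 * g := by
  induction n with
  | zero => exact ⟨0, by simp⟩
  | succ n ih =>
    obtain ⟨g, hg⟩ := ih
    refine ⟨g * (1 + X) + ((n.choose 2 : ℕ) : ℤ[X]), ?_⟩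
    have hc : (n+1).choose 2 = n.choose 2 + n := by
      rw [Nat.choose_succ_succ, Nat.choose_one_right, Nat.add_comm]
    rw [pow_succ, hg, hc]
    push_cast
    ring

lemma matrix_expand (A : R3) (n : ℕ) : ∃ G : R3,
    A ^ n = 1 + (n : R3) * (A - 1) + ((n.choose 2 : ℕ) : R3) * (A - 1) ^ 2 + (A - 1) ^ 3 * G := by
  obtain ⟨g, hg⟩ := poly_expand n
  refine ⟨Polynomial.aeval (A - 1) g, ?_⟩
  have h := congrArg (Polynomial.aeval (A - 1) : ℤ[X] →ₐ[ℤ] R3) hg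
  simp only [map_pow, map_add, _root_.map_one, _root_.map_mul, Polynomial.aeval_X,
    map_natCast, add_sub_cancel] at h
  exact h

lemma natCast_mul_apply (n : ℕ) (M : R3) (i j : Fin 3) : ((n : R3) * M) i j = (n : ℤ) * M i j := by
  rw [← nsmul_eq_mul, Matrix.smul_apply, nsmul_eq_mul]

lemma EDvd.natCast_mul {d : ℤ} {M : R3} (c : ℕ) (h : EDvd d M) : EDvd d ((c : R3) * M) := by
  intro i j
  rw [natCast_mul_apply]
  exact (h i j).mul_left _

lemma step {p : ℕ} (hp : p.Prime) {j : ℕ} (hj : 1 ≤ j) {A : R3}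
    (hd : EDvd ((p : ℤ) ^ j) (A - 1)) {q : ℕ} (hq : q.Prime) (hA : A ^ q = 1)
    (hcase : q ≠ p ∨ 2 ≤ j ∨ p ≠ 2) :
    EDvd ((p : ℤ) ^ (j + 1)) (A - 1) := by
  obtain ⟨G, hG⟩ := matrix_expand A q
  rw [hA, add_assoc, add_assoc] at hG
  have h0 := left_eq_add.mp hG
  have hneg := eq_neg_of_add_eq_zero_left h0
  set B := A - 1 with hB
  have hB2 : EDvd ((p : ℤ) ^ (j + j)) (B ^ 2) := by
    rw [pow_two, pow_add]; exact hd.mul hd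
  have hB3G : EDvd ((p : ℤ) ^ (j + (j + j))) (B ^ 3 * G) := by
    rw [show B ^ 3 = B * B ^ 2 from pow_succ' B 2, mul_assoc, pow_add]
    exact hd.mul (hB2.mul_right G)
  have hpZ : Prime ((p : ℤ)) := Nat.prime_iff_prime_int.mp hp
  intro i k
  have hqB := congrArg (fun M : R3 => M i k) hneg
  simp only [Matrix.neg_apply] at hqB
  rw [natCast_mul_apply] at hqB
  by_cases hqp : q = p
  · subst hqp
    -- q = p : need q^(j+2) ∣ tail entry
    have hS : ((q : ℤ) ^ (j + 2)) ∣ (((q.choose 2 : ℕ) : R3) * B ^ 2 + B ^ 3 * G) i k := by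
      rw [Matrix.add_apply]
      refine dvd_add ?_ ((pow_dvd_pow ((q : ℤ)) (by omega : j + 2 ≤ j + (j + j))).trans
        (hB3G i k))
      rw [natCast_mul_apply]
      by_cases hp2 : q = 2
      · have hj2 : 2 ≤ j := by
          rcases hcase with h | h | h
          · exact absurd rfl h
          · exact h
          · exact absurd hp2 h
        exact ((pow_dvd_pow ((q : ℤ)) (by omega : j + 2 ≤ j + j)).trans (hB2 i k)).mul_left _
      · have h2q : 2 < q := by have := hq.two_le; omega
        have hcd : (q : ℤ) ∣ ((q.choose 2 : ℕ) : ℤ) :=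
          Int.ofNat_dvd.mpr (hq.dvd_choose_self (by omega) h2q)
        have h5 : (q : ℤ) * (q : ℤ) ^ (j + j) ∣ ((q.choose 2 : ℕ) : ℤ) * (B ^ 2) i k :=
          mul_dvd_mul hcd (hB2 i k)
        have h6 : (q : ℤ) ^ (j + 2) ∣ (q : ℤ) * (q : ℤ) ^ (j + j) := by
          rw [← pow_succ']
          exact pow_dvd_pow _ (by omega)
        exact h6.trans h5
    have hdvd : ((q : ℤ) ^ (j + 2)) ∣ (q : ℤ) * B i k := by
      rw [hqB]; exact hS.neg_right
    refine (mul_dvd_mul_iff_left (Int.natCast_ne_zero.mpr hq.ne_zero)).mp ?_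
    rw [← pow_succ']
    exact hdvd
  · -- q ≠ p : coprime case
    have hS : ((p : ℤ) ^ (j + 1)) ∣ (((q.choose 2 : ℕ) : R3) * B ^ 2 + B ^ 3 * G) i k := by
      have h1 := (hB2.natCast_mul (q.choose 2)).add
        (hB3G.of_dvd (pow_dvd_pow _ (by omega : j + j ≤ j + (j + j))))
      exact (pow_dvd_pow ((p : ℤ)) (by omega : j + 1 ≤ j + j)).trans (h1 i k)
    have hdvd : ((p : ℤ) ^ (j + 1)) ∣ (q : ℤ) * B i k := by
      rw [hqB]; exact hS.neg_right
    refine hpZ.pow_dvd_of_dvd_mul_left _ ?_ hdvd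
    intro hpq
    exact hqp ((Nat.prime_dvd_prime_iff_eq hp hq).mp (Int.ofNat_dvd.mp hpq)).symm

lemma geom (A : R3) (m : ℕ) : ∃ S : R3, A ^ m - 1 = (A - 1) * S := by
  induction m with
  | zero => exact ⟨0, by simp⟩
  | succ m ih =>
    obtain ⟨S, hS⟩ := ih
    refine ⟨A ^ m + S, ?_⟩
    rw [mul_add, ← hS, show (A - 1) * A ^ m = A ^ (m + 1) - A ^ m by
      rw [sub_mul, one_mul, ← pow_succ']]
    abel

lemma primeOrder {p : ℕ} (hp : p.Prime) {k : ℕ} (hk : 1 ≤ k) {A : R3}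
    (hd : EDvd ((p : ℤ) ^ k) (A - 1)) {q : ℕ} (hq : q.Prime) (hA : A ^ q = 1)
    (hcase : q ≠ p ∨ 2 ≤ k ∨ p ≠ 2) : A = 1 := by
  have hall : ∀ m : ℕ, EDvd ((p : ℤ) ^ (k + m)) (A - 1) := by
    intro m
    induction m with
    | zero => exact hd
    | succ m ih =>
      have hc' : q ≠ p ∨ 2 ≤ k + m ∨ p ≠ 2 := by
        rcases hcase with h | h | h
        · exact Or.inl h
        · exact Or.inr (Or.inl (by omega))
        · exact Or.inr (Or.inr h)
      have := step hp (by omega : 1 ≤ k + m) ih hq hA hc'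
      rwa [Nat.add_succ]
  have hzero : A - 1 = 0 := by
    apply Matrix.ext
    intro i j
    simp only [Matrix.zero_apply]
    by_contra hne
    set a := (A - 1) i j with ha
    have hle : ∀ m : ℕ, (p : ℤ) ^ (k + m) ≤ |a| := fun m =>
      Int.le_of_dvd (abs_pos.mpr hne) ((dvd_abs _ _).mpr (hall m i j))
    have h2p : (2 : ℤ) ≤ (p : ℤ) := by exact_mod_cast hp.two_le
    set m := a.natAbs with hm
    have h1 : (2 : ℤ) ^ m ≤ (p : ℤ) ^ (k + m) := by
      calc (2 : ℤ) ^ m ≤ (p : ℤ) ^ m := pow_le_pow_left₀ (by norm_num) h2p m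
        _ ≤ (p : ℤ) ^ (k + m) := pow_le_pow_right₀ (by omega) (by omega)
    have h2 : |a| < (2 : ℤ) ^ m := by
      rw [Int.abs_eq_natAbs]
      exact_mod_cast (Nat.lt_two_pow_self (n := m))
    exact absurd ((h1.trans (hle m)).trans_lt h2) (lt_irrefl _)
  exact sub_eq_zero.mp hzero

lemma finOrder {p : ℕ} (hp : p.Prime) {k : ℕ} (hk : 1 ≤ k) {A : R3}
    (hd : EDvd ((p : ℤ) ^ k) (A - 1)) {n : ℕ} (hn : n ≠ 0) (hA : A ^ n = 1)
    (hcase : (2 ≤ k ∨ p ≠ 2) ∨ ¬ p ∣ n) : A = 1 := by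
  induction n using Nat.strong_induction_on with
  | _ n IH =>
    by_cases h1 : n = 1
    · rw [h1, pow_one] at hA; exact hA
    · have hqprime : (n.minFac).Prime := Nat.minFac_prime h1
      set q := n.minFac with hqdef
      have hmq : n / q * q = n := Nat.div_mul_cancel n.minFac_dvd
      have hApow : (A ^ (n / q)) ^ q = 1 := by rw [← pow_mul, hmq]; exact hA
      have hd' : EDvd ((p : ℤ) ^ k) (A ^ (n / q) - 1) := by
        obtain ⟨S, hS⟩ := geom A (n / q)
        rw [hS]; exact hd.mul_right S
      have hc' : q ≠ p ∨ 2 ≤ k ∨ p ≠ 2 := by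
        rcases hcase with h | h
        · exact Or.inr h
        · exact Or.inl (fun hqp => h (hqp ▸ n.minFac_dvd))
      have hstep : A ^ (n / q) = 1 := primeOrder hp hk hd' hqprime hApow hc'
      have hlt : n / q < n := Nat.div_lt_self (Nat.pos_of_ne_zero hn) hqprime.one_lt
      have hne : n / q ≠ 0 := by
        intro h0; rw [h0] at hmq; simp at hmq; exact hn hmq.symm
      have hc'' : (2 ≤ k ∨ p ≠ 2) ∨ ¬ p ∣ (n / q) := by
        rcases hcase with h | h
        · exact Or.inl h
        · exact Or.inr (fun hdvd => h (hdvd.trans (Nat.div_dvd_of_dvd n.minFac_dvd)))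
      exact IH (n / q) hlt hne hstep hc''

lemma solvable_of_card_dvd_two (G : Type*) [Group G] [Finite G] (h : Nat.card G ∣ 2) :
    IsSolvable G := by
  have hsq : ∀ x : G, x * x = 1 := by
    intro x
    have h2 : x ^ (2 : ℕ) = 1 :=
      orderOf_dvd_iff_pow_eq_one.mp ((orderOf_dvd_natCard x).trans h)
    rwa [pow_two] at h2
  have hcomm : ∀ a b : G, a * b = b * a := by
    have hinv : ∀ x : G, x⁻¹ = x := fun x => inv_eq_of_mul_eq_one_right (hsq x)
    intro a b
    calc a * b = (a * b)⁻¹ := (hinv _).symm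
      _ = b⁻¹ * a⁻¹ := mul_inv_rev a b
      _ = b * a := by rw [hinv, hinv]
  exact Group.isSolvable_of_comm hcomm

lemma solvable_of_card_dvd_six (G : Type*) [Group G] [Finite G] (h : Nat.card G ∣ 6) :
    IsSolvable G := by
  haveI : Fact (Nat.Prime 3) := ⟨by norm_num⟩
  obtain ⟨P⟩ : Nonempty (Sylow 3 G) := inferInstance
  have hidx : P.1.index ∣ 6 := P.1.index_dvd_card.trans h
  have hnd : ¬ 3 ∣ P.1.index := P.not_dvd_index
  have hne : P.1.index ≠ 0 := Subgroup.index_ne_zero_of_finite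
  have key : ∀ n : ℕ, n ∣ 6 → ¬ 3 ∣ n → n ≠ 0 → n = 1 ∨ n = 2 := by
    intro n hd h3 h0
    have hle := Nat.le_of_dvd (by norm_num) hd
    interval_cases n <;> first | omega | (revert hd h3; decide)
  have hidx2 : P.1.index = 1 ∨ P.1.index = 2 := key _ hidx hnd hne
  set φ := MulAction.toPermHom G (G ⧸ P.1) with hφ
  have hker : φ.ker ≤ P.1 := by
    rw [← Subgroup.normalCore_eq_ker]; exact Subgroup.normalCore_le P.1
  haveI hks : Group.IsSolvable φ.ker := by
    haveI := (P.isPGroup'.to_le hker).isNilpotent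
    infer_instance
  haveI hps : Group.IsSolvable (Equiv.Perm (G ⧸ P.1)) := by
    apply solvable_of_card_dvd_two
    have hcard : Nat.card (G ⧸ P.1) = P.1.index := P.1.index_eq_card.symm
    haveI : DecidableEq (G ⧸ P.1) := Classical.decEq _
    haveI : Fintype (G ⧸ P.1) := Fintype.ofFinite _
    rw [Nat.card_eq_fintype_card, Fintype.card_perm, ← Nat.card_eq_fintype_card, hcard]
    rcases hidx2 with h1 | h1 <;> rw [h1] <;> decide
  exact solvable_of_ker_le_range φ.ker.subtype φ (le_of_eq (Subgroup.range_subtype _).symm)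

lemma solvable_of_card_dvd_96 (G : Type*) [Group G] [Finite G] (h : Nat.card G ∣ 96) :
    IsSolvable G := by
  haveI : Fact (Nat.Prime 2) := ⟨by norm_num⟩
  obtain ⟨P⟩ : Nonempty (Sylow 2 G) := inferInstance
  have hidx : P.1.index ∣ 96 := P.1.index_dvd_card.trans h
  have hnd : ¬ 2 ∣ P.1.index := P.not_dvd_index
  have hne : P.1.index ≠ 0 := Subgroup.index_ne_zero_of_finite
  have key : ∀ n : ℕ, n ∣ 96 → ¬ 2 ∣ n → n ≠ 0 → n = 1 ∨ n = 3 := by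
    intro n hd h3 h0
    have hle := Nat.le_of_dvd (by norm_num) hd
    interval_cases n <;> first | omega | (revert hd h3; decide)
  have hidx2 : P.1.index = 1 ∨ P.1.index = 3 := key _ hidx hnd hne
  set φ := MulAction.toPermHom G (G ⧸ P.1) with hφ
  have hker : φ.ker ≤ P.1 := by
    rw [← Subgroup.normalCore_eq_ker]; exact Subgroup.normalCore_le P.1
  haveI hks : Group.IsSolvable φ.ker := by
    haveI := (P.isPGroup'.to_le hker).isNilpotent
    infer_instance
  haveI hps : Group.IsSolvable (Equiv.Perm (G ⧸ P.1)) := by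
    apply solvable_of_card_dvd_six
    have hcard : Nat.card (G ⧸ P.1) = P.1.index := P.1.index_eq_card.symm
    haveI : DecidableEq (G ⧸ P.1) := Classical.decEq _
    haveI : Fintype (G ⧸ P.1) := Fintype.ofFinite _
    rw [Nat.card_eq_fintype_card, Fintype.card_perm, ← Nat.card_eq_fintype_card, hcard]
    rcases hidx2 with h1 | h1 <;> rw [h1] <;> decide
  exact solvable_of_ker_le_range φ.ker.subtype φ (le_of_eq (Subgroup.range_subtype _).symm)

lemma arith (n : ℕ) (hn : n ≠ 0) (h1 : n ∣ 11232)
    (h2 : ∀ r : ℕ, r.Prime → r ≠ 2 → r ^ n.factorization r ∣ 168) : n ∣ 96 := by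
  rw [← Nat.factorization_le_iff_dvd hn (by norm_num)]
  rw [Finsupp.le_iff]
  intro p hpsupp
  have hp : p.Prime := Nat.prime_of_mem_primeFactors ((Nat.support_factorization n) ▸ hpsupp)
  set v := n.factorization p with hv
  have hpv : p ^ v ∣ 96 → n.factorization p ≤ (96 : ℕ).factorization p :=
    fun h => (Nat.Prime.pow_dvd_iff_le_factorization hp (by norm_num)).mp h
  apply hpv
  by_cases hp2 : p = 2
  · subst hp2
    have hdn : (2 : ℕ) ^ v ∣ 11232 := (Nat.ordProj_dvd n 2).trans h1
    have hvle : v ≤ 5 := by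
      by_contra hgt
      have : (2 : ℕ) ^ 6 ∣ 11232 := (pow_dvd_pow 2 (by omega)).trans hdn
      norm_num at this
    exact (pow_dvd_pow 2 hvle).trans (by norm_num)
  · have hv168 : p ^ v ∣ 168 := h2 p hp hp2
    by_cases hv0 : v = 0
    · simp [hv0]
    · have hpd1 : p ∣ 168 := (dvd_pow_self p hv0).trans hv168
      have hpd2 : p ∣ 11232 := (dvd_pow_self p hv0).trans ((Nat.ordProj_dvd n p).trans h1)
      have h24 : p ∣ 24 := Nat.dvd_gcd hpd1 hpd2
      have hple : p ≤ 24 := Nat.le_of_dvd (by norm_num) h24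
      have h2le : 2 ≤ p := hp.two_le
      have hp3 : p = 3 := by
        interval_cases p <;> revert h24 hp2 hp <;> decide
      subst hp3
      have hvle : v ≤ 1 := by
        by_contra hgt
        have : (3 : ℕ) ^ 2 ∣ 168 := (pow_dvd_pow 3 (by omega)).trans hv168
        norm_num at this
      exact (pow_dvd_pow 3 hvle).trans (by norm_num)

def redGL (m : ℕ) : GL (Fin 3) ℤ →* GL (Fin 3) (ZMod m) :=
  Units.map ((Int.castRingHom (ZMod m)).mapMatrix).toMonoidHom

lemma red_ker {p k : ℕ} (hp : p.Prime) (hk : 1 ≤ k) {m : ℕ} (hm : m = p ^ k)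
    (x : GL (Fin 3) ℤ) {n : ℕ} (hn : n ≠ 0) (hxn : x ^ n = 1)
    (hred : redGL m x = 1) (hcase : (2 ≤ k ∨ p ≠ 2) ∨ ¬ p ∣ n) : x = 1 := by
  set A : R3 := (x : Matrix (Fin 3) (Fin 3) ℤ) with hA
  have hApow : A ^ n = 1 := by
    have := congrArg Units.val hxn
    simpa [Units.val_pow_eq_pow_val] using this
  have hdvd : EDvd ((p : ℤ) ^ k) (A - 1) := by
    have hval := congrArg Units.val hred
    have hmap : (Int.castRingHom (ZMod m)).mapMatrix (A - 1) = 0 := by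
      have : (Int.castRingHom (ZMod m)).mapMatrix A = 1 := hval
      rw [map_sub, this, _root_.map_one, sub_self]
    intro i j
    have hentry : ((((A - 1) i j : ℤ) : ZMod m)) = 0 := by
      have := congrArg (fun M : Matrix (Fin 3) (Fin 3) (ZMod m) => M i j) hmap
      simpa [RingHom.mapMatrix_apply, Matrix.map_apply] using this
    have := (ZMod.intCast_zmod_eq_zero_iff_dvd _ m).mp hentry
    rw [hm] at this
    exact_mod_cast this
  have : A = 1 := finOrder hp hk hdvd hn hApow hcase
  exact Units.ext this

theorem finite_subgroup_GL3Z_solvable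
    (H : Subgroup (GL (Fin 3) ℤ)) (hH : Finite H) :
    IsSolvable H := by
  haveI := hH
  apply solvable_of_card_dvd_96
  apply arith (Nat.card H) Nat.card_pos.ne'
  · haveI : Fact (Nat.Prime 3) := ⟨by norm_num⟩
    have hGL3 : Nat.card (GL (Fin 3) (ZMod 3)) = 11232 := by
      rw [Matrix.card_GL_field]; simp [ZMod.card, Fin.prod_univ_three]
    rw [← hGL3]
    refine Subgroup.card_dvd_of_injective ((redGL 3).comp H.subtype) ?_
    refine (injective_iff_map_eq_one _).mpr ?_
    intro a ha
    have hx : H.subtype a ^ orderOf a = 1 := by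
      rw [← map_pow, pow_orderOf_eq_one a, _root_.map_one]
    have h1 : H.subtype a = 1 :=
      red_ker (p := 3) (k := 1) (by norm_num) le_rfl (by norm_num) _ (orderOf_pos a).ne' hx
        ha (Or.inl (Or.inr (by norm_num)))
    exact Subgroup.subtype_injective H (by rw [h1, _root_.map_one])
  · intro r hr hr2
    haveI : Fact r.Prime := ⟨hr⟩
    obtain ⟨Q⟩ : Nonempty (Sylow r H) := inferInstance
    have hcardQ : Nat.card Q = r ^ ((Nat.card H).factorization r) := Q.card_eq_multiplicity
    rw [← hcardQ]
    haveI : Fact (Nat.Prime 2) := ⟨by norm_num⟩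
    have hGL2 : Nat.card (GL (Fin 3) (ZMod 2)) = 168 := by
      rw [Matrix.card_GL_field]; simp [ZMod.card, Fin.prod_univ_three]
    rw [← hGL2]
    refine Subgroup.card_dvd_of_injective ((redGL 2).comp (H.subtype.comp Q.1.subtype)) ?_
    refine (injective_iff_map_eq_one _).mpr ?_
    intro a ha
    have hordQ : orderOf a ∣ r ^ ((Nat.card H).factorization r) :=
      hcardQ ▸ orderOf_dvd_natCard a
    have hodd : ¬ 2 ∣ orderOf a := by
      intro h2
      have h2r : (2 : ℕ) ∣ r ^ ((Nat.card H).factorization r) := h2.trans hordQ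
      have : (2 : ℕ) ∣ r := Nat.Prime.dvd_of_dvd_pow Nat.prime_two h2r
      exact hr2 ((Nat.prime_dvd_prime_iff_eq Nat.prime_two hr).mp this).symm
    have hx : (H.subtype (Q.1.subtype a)) ^ orderOf a = 1 := by
      rw [← map_pow, ← map_pow, pow_orderOf_eq_one a, _root_.map_one, _root_.map_one]
    have h1 : H.subtype (Q.1.subtype a) = 1 :=
      red_ker (p := 2) (k := 1) Nat.prime_two le_rfl (by norm_num) _ (orderOf_pos a).ne' hx
        ha (Or.inr hodd)
    have h2 : Q.1.subtype a = 1 := Subgroup.subtype_injective H (by rw [h1, _root_.map_one])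
    exact Subgroup.subtype_injective Q.1 (by rw [h2, _root_.map_one])
end

section
/- The group SL(2,5) is minimal non-solvable: it is not solvable, but every proper subgroup of SL(2,5) is solvable. -/
open Subgroup
open scoped commutatorElement

variable {G : Type*} [Group G]

-- extension lemma
theorem solv_ext (N : Subgroup G) [N.Normal] (h1 : IsSolvable N) (h2 : IsSolvable (G ⧸ N)) :
    IsSolvable G := by
  haveI : Group.IsSolvable N := h1
  haveI : Group.IsSolvable (G ⧸ N) := h2
  exact solvable_of_ker_le_range N.subtype (QuotientGroup.mk' N)
    (by rw [QuotientGroup.ker_mk', Subgroup.range_subtype])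

theorem solv_pp [Finite G] (p n : ℕ) (hp : p.Prime) (h : Nat.card G = p ^ n) : IsSolvable G := by
  have : Fact p.Prime := ⟨hp⟩
  exact @IsNilpotent.to_isSolvable G _ (IsPGroup.of_card h).isNilpotent

-- normality from unique sylow
theorem sylow_normal_of_card_eq_one [Finite G] (p : ℕ) [Fact p.Prime] (P : Sylow p G)
    (h : Nat.card (Sylow p G) = 1) : (P : Subgroup G).Normal := by
  rw [← Subgroup.normalizer_eq_top_iff]
  rw [Sylow.card_eq_index_normalizer P] at h
  exact Subgroup.index_eq_one.mp h

theorem sylow_card_prime [Finite G] (p k q : ℕ) (hp : p.Prime) (hq : q.Prime) (hpq : p ≠ q)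
    (h : Nat.card G = p ^ k * q) (P : Sylow q G) : Nat.card P = q := by
  have : Fact q.Prime := ⟨hq⟩
  rw [Sylow.card_eq_multiplicity, h, Nat.factorization_mul ((pow_pos hp.pos k).ne') hq.ne_zero]
  simp [hp.factorization_pow, hq.factorization, Finsupp.single_apply, hpq]

theorem solv_pkq [Finite G] (p k q : ℕ) (hp : p.Prime) (hq : q.Prime) (hpq : p ≠ q)
    (h : Nat.card G = p ^ k * q)
    (hcond : ∀ n, n ∣ p ^ k → n % q = 1 → n = 1) : IsSolvable G := by
  have : Fact q.Prime := ⟨hq⟩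
  obtain ⟨P⟩ : Nonempty (Sylow q G) := inferInstance
  have hcP : Nat.card P = q := sylow_card_prime p k q hp hq hpq h P
  have hidx : (P : Subgroup G).index = p ^ k := by
    have := Subgroup.card_mul_index (P : Subgroup G)
    rw [hcP, h] at this
    exact Nat.eq_of_mul_eq_mul_left hq.pos (by rw [this, Nat.mul_comm])
  have hn1 : Nat.card (Sylow q G) = 1 := by
    refine hcond _ (hidx ▸ P.card_dvd_index) ?_
    have := card_sylow_modEq_one q G
    rwa [Nat.ModEq, Nat.one_mod_eq_one.mpr hq.one_lt.ne'] at this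
  have hnorm : (P : Subgroup G).Normal := sylow_normal_of_card_eq_one q P hn1
  refine solv_ext (P : Subgroup G) (solv_pp q 1 hq (by simpa using hcP)) ?_
  exact solv_pp p k hp (by rw [← Subgroup.index_eq_card, hidx])

theorem solv_div_pp [Finite G] (p n : ℕ) (hp : p.Prime) (h : Nat.card G ∣ p ^ n) :
    IsSolvable G := by
  obtain ⟨j, -, hj⟩ := (Nat.dvd_prime_pow hp).mp h
  exact solv_pp p j hp hj

theorem solv_2k3 [Finite G] (k : ℕ) (h : Nat.card G = 2 ^ k * 3) : IsSolvable G := by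
  have : Fact (Nat.Prime 2) := ⟨Nat.prime_two⟩
  obtain ⟨P⟩ : Nonempty (Sylow 2 G) := inferInstance
  have hcP : Nat.card P = 2 ^ k := by
    rw [Sylow.card_eq_multiplicity, h, Nat.factorization_mul (pow_pos (by norm_num) k).ne'
      (by norm_num)]
    simp [Nat.prime_two.factorization_pow, Nat.prime_three.factorization, Finsupp.single_apply]
  have hidx : (P : Subgroup G).index = 3 := by
    have := Subgroup.card_mul_index (P : Subgroup G)
    rw [hcP, h] at this
    exact Nat.eq_of_mul_eq_mul_left (pow_pos (by norm_num) k) this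
  have hdvd : Nat.card (Sylow 2 G) ∣ 3 := hidx ▸ P.card_dvd_index
  rcases (Nat.dvd_prime Nat.prime_three).mp hdvd with h1 | h3
  · have hnorm : (P : Subgroup G).Normal := sylow_normal_of_card_eq_one 2 P h1
    exact solv_ext (P : Subgroup G) (solv_pp 2 k Nat.prime_two hcP)
      (solv_pp 3 1 Nat.prime_three (by rw [← Subgroup.index_eq_card, hidx]; ring))
  · -- normalizer = P
    have hnormalizer : Subgroup.normalizer (P : Set G) = (P : Subgroup G) := by
      refine (Subgroup.eq_of_le_of_card_ge Subgroup.le_normalizer ?_).symm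
      have hidxn : (Subgroup.normalizer (P : Set G)).index = 3 := by
        rw [← P.card_eq_index_normalizer, h3]
      have h2 := Subgroup.card_mul_index (Subgroup.normalizer (P : Set G))
      rw [hidxn, h] at h2
      have : Nat.card (Subgroup.normalizer (P : Set G)) = 2 ^ k :=
        Nat.eq_of_mul_eq_mul_right (by norm_num) h2
      exact (this.trans hcP.symm).le
    set φ := MulAction.toPermHom G (Sylow 2 G) with hφ
    have hker : φ.ker ≤ (P : Subgroup G) := by
      intro g hg
      have : g • P = P := by
        have h1 : φ g = 1 := hg
        have := DFunLike.congr_fun h1 P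
        simpa [φ, MulAction.toPermHom] using this
      rw [← hnormalizer]
      exact Sylow.smul_eq_iff_mem_normalizer.mp this
    haveI : Group.IsSolvable φ.ker := solv_div_pp 2 k Nat.prime_two
      (hcP ▸ Subgroup.card_dvd_of_le hker)
    haveI : Group.IsSolvable (Equiv.Perm (Sylow 2 G)) := by
      have : Fintype (Sylow 2 G) := Fintype.ofFinite _
      have : DecidableEq (Sylow 2 G) := Classical.decEq _
      refine solv_pkq 2 1 3 Nat.prime_two Nat.prime_three (by norm_num) ?_ ?_
      · rw [Nat.card_eq_fintype_card, Fintype.card_perm, ← Nat.card_eq_fintype_card, h3]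
        rfl
      · intro n hn hmod
        rcases (Nat.dvd_prime Nat.prime_two).mp (by simpa using hn) with rfl | rfl
        · rfl
        · simp at hmod
    exact solvable_of_ker_le_range φ.ker.subtype φ (by rw [Subgroup.range_subtype])

theorem sylow_card_prime' [Finite G] (m q : ℕ) (hq : q.Prime) (hm : ¬ q ∣ m) (hm0 : m ≠ 0)
    (h : Nat.card G = m * q) (P : Sylow q G) : Nat.card P = q := by
  have : Fact q.Prime := ⟨hq⟩
  rw [Sylow.card_eq_multiplicity, h, Nat.factorization_mul hm0 hq.ne_zero]
  simp [hq.factorization, Nat.factorization_eq_zero_of_not_dvd hm]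

theorem sylow_index_eq [Finite G] (m q : ℕ) (hq : q.Prime) (h : Nat.card G = m * q)
    (P : Sylow q G) (hcP : Nat.card P = q) : (P : Subgroup G).index = m := by
  have := Subgroup.card_mul_index (P : Subgroup G)
  rw [hcP, h] at this
  exact Nat.eq_of_mul_eq_mul_right hq.pos (by rw [Nat.mul_comm, this, Nat.mul_comm m q])

theorem card_orderOf_eq [Fintype G] [DecidableEq G] (p : ℕ) (hp : p.Prime)
    (hP : ∀ P : Sylow p G, Nat.card P = p) :
    (Finset.univ.filter (fun g : G => orderOf g = p)).card = Nat.card (Sylow p G) * (p - 1) := by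
  have : Fact p.Prime := ⟨hp⟩
  have : Fintype (Sylow p G) := Fintype.ofFinite _
  have hdec : ∀ P : Sylow p G, DecidablePred (· ∈ (P : Subgroup G)) :=
    fun P => Classical.decPred _
  classical
  set t : Sylow p G → Finset G :=
    fun P => Finset.univ.filter (fun g => g ∈ (P : Subgroup G) ∧ g ≠ 1) with ht
  have hsub : ∀ (P : Sylow p G) (g : G), g ∈ (P : Subgroup G) → g ≠ 1 → orderOf g = p := by
    intro P g hg hg1
    have h1 : Subgroup.zpowers g ≤ (P : Subgroup G) := Subgroup.zpowers_le.mpr hg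
    have h2 : orderOf g ∣ p := by
      have := Subgroup.card_dvd_of_le h1
      rwa [Nat.card_zpowers, hP P] at this
    rcases (Nat.dvd_prime hp).mp h2 with h | h
    · exact absurd (orderOf_eq_one_iff.mp h) hg1
    · exact h
  have huniq : ∀ (P Q : Sylow p G) (g : G), g ∈ (P : Subgroup G) → g ≠ 1 →
      g ∈ (Q : Subgroup G) → P = Q := by
    intro P Q g hgP hg1 hgQ
    have key : ∀ R : Sylow p G, g ∈ (R : Subgroup G) → (R : Subgroup G) = Subgroup.zpowers g := by
      intro R hgR
      refine (Subgroup.eq_of_le_of_card_ge (Subgroup.zpowers_le.mpr hgR) ?_).symm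
      rw [Nat.card_zpowers, hP R, hsub P g hgP hg1]
    exact Sylow.ext ((key P hgP).trans (key Q hgQ).symm)
  have hcard_t : ∀ P : Sylow p G, (t P).card = p - 1 := by
    intro P
    have : t P = (Finset.univ.filter (fun g => g ∈ (P : Subgroup G))).erase 1 := by
      ext g
      simp only [ht, Finset.mem_erase, Finset.mem_filter, Finset.mem_univ, true_and]
      tauto
    rw [this, Finset.card_erase_of_mem (by simp [(P : Subgroup G).one_mem]),
      ← Fintype.card_subtype]
    rw [← Nat.card_eq_fintype_card]
    rw [show Nat.card {x // x ∈ (P : Subgroup G)} = Nat.card (P : Subgroup G) from rfl, hP P]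
  have hunion : Finset.univ.filter (fun g : G => orderOf g = p) = Finset.univ.biUnion t := by
    ext g
    simp only [Finset.mem_filter, Finset.mem_biUnion, Finset.mem_univ, true_and, ht]
    constructor
    · intro hg
      have hg1 : g ≠ 1 := by
        intro h; rw [h, orderOf_one] at hg; exact hp.one_lt.ne' hg.symm
      have : IsPGroup p (Subgroup.zpowers g) :=
        IsPGroup.of_card (by rw [Nat.card_zpowers, hg, pow_one])
      obtain ⟨Q, hQ⟩ := this.exists_le_sylow
      exact ⟨Q, hQ (Subgroup.mem_zpowers g), hg1⟩
    · rintro ⟨P, hgP, hg1⟩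
      exact hsub P g hgP hg1
  rw [hunion, Finset.card_biUnion, Finset.sum_congr rfl (fun P _ => hcard_t P)]
  · simp [Nat.card_eq_fintype_card, mul_comm]
  · intro P _ Q _ hPQ
    rw [Function.onFun, Finset.disjoint_left]
    rintro g hgP hgQ
    simp only [ht, Finset.mem_filter] at hgP hgQ
    exact hPQ (huniq P Q g hgP.2.1 hgP.2.2 hgQ.2.1)

theorem solv_30 [Finite G] (h : Nat.card G = 30) : IsSolvable G := by
  have f2 : Fact (Nat.Prime 2) := ⟨Nat.prime_two⟩
  have f3 : Fact (Nat.Prime 3) := ⟨Nat.prime_three⟩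
  have f5 : Fact (Nat.Prime 5) := ⟨by norm_num⟩
  obtain ⟨P5⟩ : Nonempty (Sylow 5 G) := inferInstance
  obtain ⟨P3⟩ : Nonempty (Sylow 3 G) := inferInstance
  have hc5 : ∀ P : Sylow 5 G, Nat.card P = 5 :=
    fun P => sylow_card_prime' 6 5 (by norm_num) (by norm_num) (by norm_num) h P
  have hc3 : ∀ P : Sylow 3 G, Nat.card P = 3 :=
    fun P => sylow_card_prime' 10 3 Nat.prime_three (by norm_num) (by norm_num)
      (by rw [h]) P
  have hidx5 : (P5 : Subgroup G).index = 6 := sylow_index_eq 6 5 (by norm_num) h P5 (hc5 P5)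
  have hidx3 : (P3 : Subgroup G).index = 10 :=
    sylow_index_eq 10 3 Nat.prime_three (by rw [h]) P3 (hc3 P3)
  by_cases hn5 : Nat.card (Sylow 5 G) = 1
  · have hnorm : (P5 : Subgroup G).Normal := sylow_normal_of_card_eq_one 5 P5 hn5
    refine solv_ext (P5 : Subgroup G) (solv_pp 5 1 (by norm_num) (by simpa using hc5 P5)) ?_
    exact solv_2k3 1 (by rw [← Subgroup.index_eq_card, hidx5]; ring)
  by_cases hn3 : Nat.card (Sylow 3 G) = 1
  · have hnorm : (P3 : Subgroup G).Normal := sylow_normal_of_card_eq_one 3 P3 hn3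
    refine solv_ext (P3 : Subgroup G) (solv_pp 3 1 Nat.prime_three (by simpa using hc3 P3)) ?_
    refine solv_pkq 2 1 5 Nat.prime_two (by norm_num) (by norm_num)
      (by rw [← Subgroup.index_eq_card, hidx3]; ring) ?_
    intro n hn hmod
    rcases (Nat.dvd_prime Nat.prime_two).mp (by simpa using hn) with rfl | rfl
    · rfl
    · simp at hmod
  -- contradiction by counting
  exfalso
  have hn5' : Nat.card (Sylow 5 G) = 6 := by
    have hdvd : Nat.card (Sylow 5 G) ∣ 6 := hidx5 ▸ P5.card_dvd_index
    have hmod := card_sylow_modEq_one 5 G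
    rw [Nat.ModEq] at hmod
    have hle := Nat.le_of_dvd (by norm_num) hdvd
    interval_cases (Nat.card (Sylow 5 G)) <;> omega
  have hn3' : Nat.card (Sylow 3 G) = 10 := by
    have hdvd : Nat.card (Sylow 3 G) ∣ 10 := hidx3 ▸ P3.card_dvd_index
    have hmod := card_sylow_modEq_one 3 G
    rw [Nat.ModEq] at hmod
    have hle := Nat.le_of_dvd (by norm_num) hdvd
    interval_cases (Nat.card (Sylow 3 G)) <;> omega
  have : Fintype G := Fintype.ofFinite _
  have : DecidableEq G := Classical.decEq _
  have hS5 := card_orderOf_eq 5 (by norm_num) hc5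
  have hS3 := card_orderOf_eq 3 Nat.prime_three hc3
  rw [hn5'] at hS5
  rw [hn3'] at hS3
  have hdisj : Disjoint (Finset.univ.filter (fun g : G => orderOf g = 5))
      (Finset.univ.filter (fun g : G => orderOf g = 3)) := by
    rw [Finset.disjoint_left]
    intro g hg5 hg3
    simp only [Finset.mem_filter] at hg5 hg3
    omega
  have hle := Finset.card_le_univ ((Finset.univ.filter (fun g : G => orderOf g = 5)) ∪
    (Finset.univ.filter (fun g : G => orderOf g = 3)))
  rw [Finset.card_union_of_disjoint hdisj, hS5, hS3, ← Nat.card_eq_fintype_card, h] at hle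
  omega

abbrev SL5 := Matrix.SpecialLinearGroup (Fin 2) (ZMod 5)

instance : DecidableEq SL5 :=
  fun a b => decidable_of_iff (a.1 = b.1) Subtype.ext_iff.symm

def uu (t : ZMod 5) : SL5 := ⟨!![1, t; 0, 1], by simp [Matrix.det_fin_two_of]⟩
def ll (t : ZMod 5) : SL5 := ⟨!![1, 0; t, 1], by simp [Matrix.det_fin_two_of]⟩
def ww : SL5 := ⟨!![2, 0; 0, 3], by decide⟩

set_option maxRecDepth 4000 in
theorem comm_u (t : ZMod 5) : ⁅ww, uu (2 * t)⁆ = uu t := by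
  revert t; decide

set_option maxRecDepth 4000 in
theorem comm_l (t : ZMod 5) : ⁅ww, ll (2 * t)⁆ = ll t := by
  revert t; decide

set_option maxRecDepth 100000 in
theorem decomp : ∀ a b c d e : ZMod 5, c * e = 1 → a * d - b * c = 1 →
    !![a, b; c, d] =
      (!![1, (a-1) * e; 0, 1] : Matrix (Fin 2) (Fin 2) (ZMod 5)) * !![1, 0; c, 1] *
        !![1, (d-1) * e; 0, 1] := by decide

theorem mem_of_c_ne (H : Subgroup SL5) (hu : ∀ t, uu t ∈ H) (hl : ∀ t, ll t ∈ H)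
    (g : SL5) (hc : (g : Matrix (Fin 2) (Fin 2) (ZMod 5)) 1 0 ≠ 0) : g ∈ H := by
  set A := (g : Matrix (Fin 2) (Fin 2) (ZMod 5)) with hA
  have hdet : A 0 0 * A 1 1 - A 0 1 * A 1 0 = 1 := by
    have h2 := g.2
    rwa [Matrix.det_fin_two] at h2
  have he : A 1 0 * (A 1 0)⁻¹ = 1 := by
    have : Fact (Nat.Prime 5) := ⟨by norm_num⟩
    exact ZMod.mul_inv_of_unit (A 1 0) (IsUnit.mk0 _ hc)
  have key : g = uu ((A 0 0 - 1) * (A 1 0)⁻¹) * ll (A 1 0) * uu ((A 1 1 - 1) * (A 1 0)⁻¹) := by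
    apply Subtype.ext
    rw [Matrix.SpecialLinearGroup.coe_mul, Matrix.SpecialLinearGroup.coe_mul]
    show A = ((!![1, (A 0 0 - 1) * (A 1 0)⁻¹; 0, 1] : Matrix (Fin 2) (Fin 2) (ZMod 5)) *
      !![1, 0; A 1 0, 1]) * !![1, (A 1 1 - 1) * (A 1 0)⁻¹; 0, 1]
    rw [Matrix.eta_fin_two A]
    exact decomp (A 0 0) (A 0 1) (A 1 0) (A 1 1) ((A 1 0)⁻¹) he hdet
  rw [key]
  exact mul_mem (mul_mem (hu _) (hl _)) (hu _)

theorem gen_mem (H : Subgroup SL5) (hu : ∀ t, uu t ∈ H) (hl : ∀ t, ll t ∈ H) (g : SL5) :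
    g ∈ H := by
  by_cases hc : (g : Matrix (Fin 2) (Fin 2) (ZMod 5)) 1 0 ≠ 0
  · exact mem_of_c_ne H hu hl g hc
  · push_neg at hc
    have hdet : (g : Matrix (Fin 2) (Fin 2) (ZMod 5)) 0 0 *
        (g : Matrix (Fin 2) (Fin 2) (ZMod 5)) 1 1 = 1 := by
      have h2 := g.2
      rw [Matrix.det_fin_two] at h2
      rw [hc, mul_zero, sub_zero] at h2
      exact h2
    have hc' : ((g * ll 1 : SL5) : Matrix (Fin 2) (Fin 2) (ZMod 5)) 1 0 ≠ 0 := by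
      rw [Matrix.SpecialLinearGroup.coe_mul]
      show (((g : Matrix (Fin 2) (Fin 2) (ZMod 5)) * !![1,0;1,1] :
        Matrix (Fin 2) (Fin 2) (ZMod 5))) 1 0 ≠ 0
      rw [Matrix.mul_apply, Fin.sum_univ_two]
      simp only [Matrix.cons_val_zero, Matrix.cons_val_one, Matrix.head_cons, hc,
          Matrix.cons_val', Matrix.head_fin_const, Matrix.empty_val', Matrix.cons_val_fin_one,
          Matrix.of_apply]
      intro h0
      rw [show (0:ZMod 5) * 1 + (g : Matrix (Fin 2) (Fin 2) (ZMod 5)) 1 1 * 1 =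
        (g : Matrix (Fin 2) (Fin 2) (ZMod 5)) 1 1 by ring] at h0
      rw [h0, mul_zero] at hdet
      exact (by decide : (1 : ZMod 5) ≠ 0) hdet.symm
    have := mem_of_c_ne H hu hl (g * ll 1) hc'
    have h2 := H.mul_mem this (H.inv_mem (hl 1))
    simpa [mul_assoc] using h2

theorem commutator_top : commutator SL5 = ⊤ := by
  rw [eq_top_iff]
  intro g _
  refine gen_mem _ (fun t => ?_) (fun t => ?_) g
  · rw [← comm_u t]
    exact Subgroup.commutator_mem_commutator (Subgroup.mem_top _) (Subgroup.mem_top _)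
  · rw [← comm_l t]
    exact Subgroup.commutator_mem_commutator (Subgroup.mem_top _) (Subgroup.mem_top _)

theorem derived_top : ∀ n, derivedSeries SL5 n = ⊤ := by
  intro n
  induction n with
  | zero => rfl
  | succ n ih => rw [derivedSeries_succ, ih]; exact commutator_top

theorem SL5_not_solvable : ¬ IsSolvable SL5 := by
  apply not_solvable_of_mem_derivedSeries (g := uu 1)
  · decide
  · intro n
    rw [derived_top n]
    exact Subgroup.mem_top _

set_option maxRecDepth 10000 in
theorem SL5_card : Nat.card SL5 = 120 := by
  rw [Nat.card_eq_fintype_card]; decide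

theorem divisor_cases (n : ℕ) (hdvd : n ∣ 120) :
    n = 1 ∨ n = 2 ∨ n = 3 ∨ n = 4 ∨ n = 5 ∨ n = 6 ∨ n = 8 ∨ n = 10 ∨ n = 12 ∨ n = 15 ∨
    n = 20 ∨ n = 24 ∨ n = 30 ∨ n = 40 ∨ n = 60 ∨ n = 120 := by
  have hle : n ≤ 120 := Nat.le_of_dvd (by norm_num) hdvd
  interval_cases n <;> omega

theorem SL2_5_mns :
    ¬ IsSolvable (Matrix.SpecialLinearGroup (Fin 2) (ZMod 5)) ∧
    ∀ H : Subgroup (Matrix.SpecialLinearGroup (Fin 2) (ZMod 5)), H ≠ ⊤ →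
      IsSolvable H := by
  refine ⟨SL5_not_solvable, fun H hH => ?_⟩
  have hdvd : Nat.card H ∣ 120 := SL5_card ▸ Subgroup.card_subgroup_dvd_card H
  have h120 : Nat.card H ≠ 120 := fun h =>
    hH (Subgroup.eq_top_of_card_eq H (h.trans SL5_card.symm))
  have h60 : Nat.card H ≠ 60 := by
    intro h60
    apply hH
    have hidx : H.index = 2 := by
      have := Subgroup.card_mul_index H
      rw [h60, SL5_card] at this
      omega
    rw [eq_top_iff, ← commutator_top, commutator_def]
    rw [Subgroup.commutator_le]
    intro g1 _ g2 _
    rw [commutatorElement_def]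
    simp only [Subgroup.mul_mem_iff_of_index_two hidx, Subgroup.inv_mem_iff]
    tauto
  have hd := divisor_cases _ hdvd
  have hc2 : ∀ n, n ∣ 2 → n % 3 = 1 → n = 1 := by
    intro n hn hm
    have := Nat.le_of_dvd (by norm_num) hn
    interval_cases n <;> omega
  have hc5 : ∀ k, k ≤ 3 → ∀ n, n ∣ 2 ^ k → n % 5 = 1 → n = 1 := by
    intro k hk n hn hm
    have h8 : n ∣ 8 := hn.trans (pow_dvd_pow 2 hk)
    have := Nat.le_of_dvd (by norm_num) h8
    interval_cases n <;> omega
  have hc35 : ∀ n, n ∣ 3 → n % 5 = 1 → n = 1 := by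
    intro n hn hm
    have := Nat.le_of_dvd (by norm_num) hn
    interval_cases n <;> omega
  rcases hd with h|h|h|h|h|h|h|h|h|h|h|h|h|h|h|h
  · have := (Nat.card_eq_one_iff_unique.mp h).1
    exact (inferInstance : Group.IsSolvable H)
  · exact solv_pp 2 1 Nat.prime_two (by omega)
  · exact solv_pp 3 1 Nat.prime_three (by omega)
  · exact solv_pp 2 2 Nat.prime_two (by omega)
  · exact solv_pp 5 1 (by norm_num) (by omega)
  · exact solv_pkq 2 1 3 Nat.prime_two Nat.prime_three (by norm_num) (by omega)
      (by simpa using hc2)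
  · exact solv_pp 2 3 Nat.prime_two (by omega)
  · exact solv_pkq 2 1 5 Nat.prime_two (by norm_num) (by norm_num) (by omega)
      (by simpa using hc5 1 (by norm_num))
  · exact solv_2k3 2 (by omega)
  · exact solv_pkq 3 1 5 Nat.prime_three (by norm_num) (by norm_num) (by omega)
      (by simpa using hc35)
  · exact solv_pkq 2 2 5 Nat.prime_two (by norm_num) (by norm_num) (by omega)
      (hc5 2 (by norm_num))
  · exact solv_2k3 3 (by omega)
  · exact solv_30 h
  · exact solv_pkq 2 3 5 Nat.prime_two (by norm_num) (by norm_num) (by omega)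
      (hc5 3 (by norm_num))
  · exact absurd h h60
  · exact absurd h h120
end
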